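/- The p-adic exponential function exp(πa), where π^{p−1} = −p, is not a meromorphic function on the closed unit disc: there do not exist power series f, g ∈ ℂ_p[[a]] converging on the closed unit disc |a| ≤ 1 with g not identically zero such that exp(πa) = f(a)/g(a) for all |a| < 1. -/

import Mathlib

/-- A power series with bounded coefficients vanishing on the open unit disc has
zero coefficients. -/
theorem aux_coeff_zero {K : Type*} [NontriviallyNormedField K] [CompleteSpace K] [IsUltrametricDist K]
    (d : ℕ → K) (D : ℝ) (hD : ∀ n, ‖d n‖ ≤ D)
    (h : ∀ a : K, ‖a‖ < 1 → ∑' n, d n * a ^ n = 0) : ∀ n, d n = 0 := by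
  have hD0 : 0 ≤ D := le_trans (norm_nonneg _) (hD 0)
  intro m
  induction m using Nat.strong_induction_on with
  | _ m ih =>
    have key : ∀ ε : ℝ, 0 < ε → ‖d m‖ ≤ ε := by
      intro ε hε
      obtain ⟨a, ha0, haε⟩ := NormedField.exists_norm_lt K
        (lt_min (by positivity : (0:ℝ) < ε / (D + 1)) one_pos)
      have ha1 : ‖a‖ < 1 := lt_of_lt_of_le haε (min_le_right _ _)
      have haε' : ‖a‖ < ε / (D + 1) := lt_of_lt_of_le haε (min_le_left _ _)
      have hbd : ∀ n, ‖d n * a ^ n‖ ≤ D * ‖a‖ ^ n := by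
        intro n
        rw [norm_mul, norm_pow]
        exact mul_le_mul_of_nonneg_right (hD n) (by positivity)
      have hsum : Summable fun n => d n * a ^ n :=
        Summable.of_norm (Summable.of_nonneg_of_le (fun n => norm_nonneg _) hbd
          ((summable_geometric_of_lt_one (norm_nonneg a) ha1).mul_left D))
      have hsplit := Summable.sum_add_tsum_nat_add (f := fun n => d n * a ^ n) (m + 1) hsum
      rw [h a ha1] at hsplit
      have hfin : ∑ i ∈ Finset.range (m + 1), d i * a ^ i = d m * a ^ m := by
        rw [Finset.sum_range_succ]
        rw [Finset.sum_eq_zero (fun i hi => by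
          rw [ih i (Finset.mem_range.mp hi), zero_mul]), zero_add]
      rw [hfin] at hsplit
      have htail : d m * a ^ m = -∑' n, d (n + (m + 1)) * a ^ (n + (m + 1)) :=
        eq_neg_of_add_eq_zero_left hsplit
      have hTnorm : ‖∑' n, d (n + (m + 1)) * a ^ (n + (m + 1))‖ ≤ D * ‖a‖ ^ (m + 1) := by
        refine IsUltrametricDist.norm_tsum_le_of_forall_le_of_nonneg (by positivity)
          (fun n => ?_)
        rw [norm_mul, norm_pow]
        exact mul_le_mul (hD _) (pow_le_pow_of_le_one (norm_nonneg a) ha1.le (by omega))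
          (by positivity) hD0
      have hdm : ‖d m‖ * ‖a‖ ^ m ≤ (D * ‖a‖) * ‖a‖ ^ m := by
        calc ‖d m‖ * ‖a‖ ^ m = ‖d m * a ^ m‖ := by rw [norm_mul, norm_pow]
          _ = ‖∑' n, d (n + (m + 1)) * a ^ (n + (m + 1))‖ := by rw [htail, norm_neg]
          _ ≤ D * ‖a‖ ^ (m + 1) := hTnorm
          _ = (D * ‖a‖) * ‖a‖ ^ m := by ring
      have h1 : ‖d m‖ ≤ D * ‖a‖ :=
        le_of_mul_le_mul_right hdm (pow_pos ha0 m)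
      calc ‖d m‖ ≤ D * ‖a‖ := h1
        _ ≤ D * (ε / (D + 1)) := mul_le_mul_of_nonneg_left haε'.le hD0
        _ ≤ ε := by
            rw [mul_div_assoc']
            rw [div_le_iff₀ (by positivity)]
            nlinarith
    by_contra hne
    have hpos : 0 < ‖d m‖ := norm_pos_iff.mpr hne
    linarith [key (‖d m‖ / 2) (by positivity)]


theorem aux_digit_sum_pow (p : ℕ) (hp : 1 < p) (k : ℕ) : (Nat.digits p (p ^ k)).sum = 1 := by
  have h1 : Nat.digits p 1 = [1] := by
    rw [Nat.digits_def' hp one_pos]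
    simp [Nat.mod_eq_of_lt hp, Nat.div_eq_of_lt hp]
  have : p ^ k = p ^ k * 1 := by ring
  rw [this, Nat.digits_base_pow_mul hp one_pos, h1]
  simp

theorem aux_digit_sum_add (p : ℕ) (hp : 1 < p) (k t : ℕ) (ht : t < p ^ k) :
    (Nat.digits p (t + p ^ k)).sum = (Nat.digits p t).sum + 1 := by
  rcases Nat.eq_zero_or_pos t with rfl | ht0
  · simpa using aux_digit_sum_pow p hp k
  · set L := (Nat.digits p t).length with hLdef
    have hL : L ≤ k := by
      by_contra hL
      have h1 : p ^ L ≤ p * t := Nat.base_pow_length_digits_le p t hp (by omega)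
      have h2 : p * t < p * p ^ k := by
        exact Nat.mul_lt_mul_of_le_of_lt (le_refl p) ht (by omega)
      have h3 : p ^ (k + 1) ≤ p ^ L := Nat.pow_le_pow_right (by omega) (by omega)
      rw [pow_succ, mul_comm] at h3
      omega
    have key : t + p ^ k = t + p ^ L * p ^ (k - L) := by
      rw [← pow_add]
      congr 2
      omega
    rw [key, ← Nat.digits_append_digits (by omega : 0 < p), List.sum_append,
      aux_digit_sum_pow p hp (k - L)]

theorem aux_digit_sum_pos (p n : ℕ) (hn : n ≠ 0) : 0 < (Nat.digits p n).sum := by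
  have hne := (Nat.digits_ne_nil_iff_ne_zero (b := p)).mpr hn
  have hlast := Nat.getLast_digit_ne_zero p hn
  have hmem : (Nat.digits p n).getLast hne ∈ Nat.digits p n := List.getLast_mem hne
  rcases Nat.eq_zero_or_pos (Nat.digits p n).sum with h0 | h
  · rw [List.sum_eq_zero_iff] at h0
    exact absurd (h0 _ hmem) hlast
  · exact h

open IsUltrametricDist in
theorem aux_norm_unit {K : Type*} [NontriviallyNormedField K] [IsUltrametricDist K]
    (p : ℕ) (hp : p.Prime) (hnorm : ‖(p : K)‖ = (p : ℝ)⁻¹) (u : ℕ) (hu : ¬ p ∣ u) :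
    ‖(u : K)‖ = 1 := by
  have hcop : IsCoprime (p : ℤ) (u : ℤ) :=
    Nat.isCoprime_iff_coprime.mpr ((Nat.Prime.coprime_iff_not_dvd hp).mpr hu)
  obtain ⟨x, y, hxy⟩ := hcop
  have hK : (x : K) * (p : K) + (y : K) * (u : K) = 1 := by
    have := congrArg (fun z : ℤ => (z : K)) hxy
    push_cast at this
    exact this
  have hle : ‖(u : K)‖ ≤ 1 := norm_natCast_le_one K u
  rcases lt_or_eq_of_le hle with hlt | heq
  · exfalso
    have hp1 : (1 : ℝ) < p := by exact_mod_cast hp.one_lt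
    have h1 : (1 : ℝ) = ‖(x : K) * (p : K) + (y : K) * (u : K)‖ := by rw [hK, norm_one]
    have h2 : ‖(x : K) * (p : K) + (y : K) * (u : K)‖ ≤
        max ‖(x : K) * (p : K)‖ ‖(y : K) * (u : K)‖ := norm_add_le_max _ _
    have h3 : ‖(x : K) * (p : K)‖ < 1 := by
      rw [norm_mul, hnorm]
      calc ‖(x : K)‖ * (p : ℝ)⁻¹ ≤ 1 * (p : ℝ)⁻¹ :=
            mul_le_mul_of_nonneg_right (norm_intCast_le_one K x) (by positivity)
        _ < 1 := by rw [one_mul]; exact inv_lt_one_of_one_lt₀ hp1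
    have h4 : ‖(y : K) * (u : K)‖ < 1 := by
      rw [norm_mul]
      calc ‖(y : K)‖ * ‖(u : K)‖ ≤ 1 * ‖(u : K)‖ :=
            mul_le_mul_of_nonneg_right (norm_intCast_le_one K y) (norm_nonneg _)
        _ < 1 := by rw [one_mul]; exact hlt
    have := lt_of_le_of_lt h2 (max_lt h3 h4)
    linarith [h1 ▸ this]
  · exact heq

theorem aux_norm_natCast {K : Type*} [NontriviallyNormedField K] [IsUltrametricDist K]
    (p : ℕ) (hp : p.Prime) (hnorm : ‖(p : K)‖ = (p : ℝ)⁻¹) (m : ℕ) (hm : m ≠ 0) :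
    ‖(m : K)‖ = (p : ℝ)⁻¹ ^ (padicValNat p m) := by
  have hfact : m.factorization p = padicValNat p m := Nat.factorization_def m hp
  have hsplit : p ^ m.factorization p * (m / p ^ m.factorization p) = m :=
    Nat.ordProj_mul_ordCompl_eq_self m p
  have hndvd : ¬ p ∣ (m / p ^ m.factorization p) := Nat.not_dvd_ordCompl hp hm
  have hcast : (m : K) = (p : K) ^ m.factorization p * ((m / p ^ m.factorization p : ℕ) : K) := by
    rw [← Nat.cast_pow, ← Nat.cast_mul, hsplit]
  rw [hcast, norm_mul, norm_pow, hnorm, aux_norm_unit p hp hnorm _ hndvd, mul_one, hfact]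


theorem aux_bound {K : Type*} [NormedAddCommGroup K] {u : ℕ → K}
    (h : Filter.Tendsto (fun n => ‖u n‖) Filter.atTop (nhds 0)) :
    ∃ C : ℝ, 0 < C ∧ ∀ n, ‖u n‖ ≤ C := by
  obtain ⟨N, hN⟩ := (Metric.tendsto_atTop.mp h) 1 one_pos
  have hN' : ∀ n ≥ N, ‖u n‖ < 1 := by
    intro n hn
    have := hN n hn
    rw [Real.dist_eq, sub_zero, abs_of_nonneg (norm_nonneg _)] at this
    exact this
  set S := (Finset.range (N + 1)).image fun n => ‖u n‖ with hS
  have hSne : S.Nonempty := ⟨‖u 0‖, Finset.mem_image.mpr ⟨0, by simp⟩⟩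
  refine ⟨max 1 (S.max' hSne), lt_of_lt_of_le one_pos (le_max_left _ _), fun n => ?_⟩
  rcases le_or_gt n N with hn | hn
  · exact le_trans (Finset.le_max' S _ (Finset.mem_image.mpr ⟨n, by simp [Nat.lt_succ_of_le hn]⟩))
      (le_max_right _ _)
  · exact le_trans (hN' n hn.le).le (le_max_left _ _)

theorem aux_norm_coeff {K : Type*} [NontriviallyNormedField K] [IsUltrametricDist K]
    [CharZero K] (p : ℕ) (hp : p.Prime) (hnorm : ‖(p : K)‖ = (p : ℝ)⁻¹)
    (π : K) (hπ : π ^ (p - 1) = -(p : K)) (n : ℕ) :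
    ‖π ^ n / (Nat.factorial n : K)‖ = ‖π‖ ^ (Nat.digits p n).sum := by
  haveI := Fact.mk hp
  have hp0 : (0:ℝ) < p := by exact_mod_cast hp.pos
  have hq0 : (0:ℝ) < (p : ℝ)⁻¹ := by positivity
  have hrp : ‖π‖ ^ (p - 1) = (p : ℝ)⁻¹ := by rw [← norm_pow, hπ, norm_neg, hnorm]
  have hfac : ((Nat.factorial n : ℕ) : K) ≠ 0 := Nat.cast_ne_zero.mpr (Nat.factorial_ne_zero n)
  have hν := sub_one_mul_padicValNat_factorial (p := p) n
  have hsle := Nat.digit_sum_le p n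
  have key : n = (Nat.digits p n).sum + (p - 1) * padicValNat p (Nat.factorial n) := by omega
  rw [norm_div, norm_pow, aux_norm_natCast p hp hnorm _ (Nat.factorial_ne_zero n)]
  rw [div_eq_iff (by positivity)]
  rw [← hrp, ← pow_mul, ← pow_add, ← key]

open Finset IsUltrametricDist in
/-- `exp(πa)`, with `π^{p−1} = −p`, is not meromorphic on the closed unit disc:
there are no power series `f, g` converging on `‖a‖ ≤ 1`, `g` not identically
zero, with `exp(πa)·g(a) = f(a)` for all `‖a‖ < 1`. -/
theorem exp_pi_not_meromorphic_on_closed_disc (p : ℕ) (hp : p.Prime)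
    (K : Type*) [NontriviallyNormedField K] [CompleteSpace K] [IsUltrametricDist K]
    [CharZero K] (hnorm : ‖(p : K)‖ = (p : ℝ)⁻¹)
    (π : K) (hπ : π ^ (p - 1) = -(p : K)) :
    ¬ ∃ f g : ℕ → K,
        (∀ a : K, ‖a‖ ≤ 1 → Summable fun n => f n * a ^ n) ∧
        (∀ a : K, ‖a‖ ≤ 1 → Summable fun n => g n * a ^ n) ∧
        (∃ n, g n ≠ 0) ∧
        (∀ a : K, ‖a‖ < 1 →
          (∑' n : ℕ, π ^ n * a ^ n / (Nat.factorial n : K)) * (∑' n : ℕ, g n * a ^ n)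
            = ∑' n : ℕ, f n * a ^ n) := by
  rintro ⟨f, g, hf, hg, ⟨n0, hn0⟩, heq⟩
  haveI := Fact.mk hp
  have hp1 : 1 < p := hp.one_lt
  have hp0 : (0:ℝ) < p := by exact_mod_cast hp.pos
  have hπ0 : π ≠ 0 := by
    intro h
    have : (-(p : K)) = 0 := by
      rw [← hπ, h, zero_pow (by omega : p - 1 ≠ 0)]
    exact (Nat.cast_ne_zero.mpr hp.pos.ne') (neg_eq_zero.mp this)
  set r := ‖π‖ with hrdef
  have hr0 : 0 < r := norm_pos_iff.mpr hπ0
  have hrp : r ^ (p - 1) = (p : ℝ)⁻¹ := by rw [hrdef, ← norm_pow, hπ, norm_neg, hnorm]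
  have hr1 : r < 1 := by
    by_contra hcon
    push_neg at hcon
    have h1 : (1:ℝ) ≤ r ^ (p - 1) := one_le_pow₀ hcon
    rw [hrp] at h1
    have : (p:ℝ) ≤ 1 := by
      rw [← inv_inv (p:ℝ)]
      exact inv_le_one_of_one_le₀ h1
    have : (1:ℝ) < p := by exact_mod_cast hp1
    linarith
  set c : ℕ → K := fun n => π ^ n / (Nat.factorial n : K) with hcdef
  have hcnorm : ∀ n, ‖c n‖ = r ^ (Nat.digits p n).sum := fun n =>
    aux_norm_coeff p hp hnorm π hπ n
  have hcle1 : ∀ n, ‖c n‖ ≤ 1 := fun n => by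
    rw [hcnorm]; exact pow_le_one₀ hr0.le hr1.le
  have hgs : Summable g := by simpa using hg 1 (by simp)
  have hfs : Summable f := by simpa using hf 1 (by simp)
  have hgt : Filter.Tendsto (fun n => ‖g n‖) Filter.atTop (nhds 0) := by
    simpa using hgs.tendsto_atTop_zero.norm
  have hft : Filter.Tendsto (fun n => ‖f n‖) Filter.atTop (nhds 0) := by
    simpa using hfs.tendsto_atTop_zero.norm
  obtain ⟨Cg, hCg0, hCg⟩ := aux_bound hgt
  obtain ⟨Cf, hCf0, hCf⟩ := aux_bound hft
  set h : ℕ → K := fun n => ∑ kl ∈ antidiagonal n, c kl.1 * g kl.2 with hhdef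
  have hhle : ∀ n, ‖h n‖ ≤ Cg := fun n =>
    norm_sum_le_of_forall_le_of_nonneg hCg0.le (fun kl _ => by
      calc ‖c kl.1 * g kl.2‖ = ‖c kl.1‖ * ‖g kl.2‖ := norm_mul _ _
        _ ≤ 1 * Cg := mul_le_mul (hcle1 _) (hCg _) (norm_nonneg _) one_pos.le
        _ = Cg := one_mul _)
  -- power series identity on the open disc gives `f = h` coefficientwise
  have hfh : ∀ n, f n = h n := by
    have hvanish : ∀ a : K, ‖a‖ < 1 → ∑' n, (h n - f n) * a ^ n = 0 := by
      intro a ha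
      have hca : Summable fun n => ‖c n * a ^ n‖ := by
        refine Summable.of_nonneg_of_le (fun n => norm_nonneg _) (fun n => ?_)
          (summable_geometric_of_lt_one (norm_nonneg a) ha)
        rw [norm_mul, norm_pow]
        calc ‖c n‖ * ‖a‖ ^ n ≤ 1 * ‖a‖ ^ n :=
              mul_le_mul_of_nonneg_right (hcle1 n) (by positivity)
          _ = ‖a‖ ^ n := one_mul _
      have hga : Summable fun n => ‖g n * a ^ n‖ := by
        refine Summable.of_nonneg_of_le (fun n => norm_nonneg _) (fun n => ?_)
          ((summable_geometric_of_lt_one (norm_nonneg a) ha).mul_left Cg)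
        rw [norm_mul, norm_pow]
        exact mul_le_mul_of_nonneg_right (hCg n) (by positivity)
      have hcauchy := tsum_mul_tsum_eq_tsum_sum_antidiagonal_of_summable_norm hca hga
      have h1 : (∑' n, π ^ n * a ^ n / (Nat.factorial n : K)) = ∑' n, c n * a ^ n :=
        tsum_congr fun n => (mul_div_right_comm _ _ _)
      have h2 : ∀ n, ∑ kl ∈ antidiagonal n, (c kl.1 * a ^ kl.1) * (g kl.2 * a ^ kl.2)
          = h n * a ^ n := by
        intro n
        rw [hhdef]
        simp only
        rw [Finset.sum_mul]
        refine Finset.sum_congr rfl fun kl hkl => ?_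
        have hkln : kl.1 + kl.2 = n := Finset.HasAntidiagonal.mem_antidiagonal.mp hkl
        rw [← hkln, pow_add]
        ring
      have heqa := heq a ha
      rw [h1, hcauchy] at heqa
      rw [tsum_congr h2] at heqa
      -- heqa : ∑' n, h n * a ^ n = ∑' n, f n * a ^ n
      have hha : Summable fun n => h n * a ^ n := by
        refine Summable.of_norm (Summable.of_nonneg_of_le (fun n => norm_nonneg _)
          (fun n => ?_) ((summable_geometric_of_lt_one (norm_nonneg a) ha).mul_left Cg))
        rw [norm_mul, norm_pow]
        exact mul_le_mul_of_nonneg_right (hhle n) (by positivity)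
      have hfa : Summable fun n => f n * a ^ n := hf a ha.le
      calc ∑' n, (h n - f n) * a ^ n = ∑' n, (h n * a ^ n - f n * a ^ n) :=
            tsum_congr fun n => by ring
        _ = (∑' n, h n * a ^ n) - ∑' n, f n * a ^ n := Summable.tsum_sub hha hfa
        _ = 0 := by rw [heqa, sub_self]
    have hDbd : ∀ n, ‖h n - f n‖ ≤ Cg + Cf := fun n =>
      le_trans (norm_sub_le _ _) (add_le_add (hhle n) (hCf n))
    have := aux_coeff_zero (fun n => h n - f n) (Cg + Cf) hDbd hvanish
    intro n
    exact (sub_eq_zero.mp (this n)).symm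
  -- choose the last index attaining the maximum of ‖g ·‖
  have hgn0 : 0 < ‖g n0‖ := norm_pos_iff.mpr hn0
  obtain ⟨N1, hN1⟩ := (Metric.tendsto_atTop.mp hgt) ‖g n0‖ hgn0
  have hN1' : ∀ n ≥ N1, ‖g n‖ < ‖g n0‖ := fun n hn => by
    have := hN1 n hn
    rwa [Real.dist_eq, sub_zero, abs_of_nonneg (norm_nonneg _)] at this
  have hn0N1 : n0 < N1 := by
    by_contra hcon
    push_neg at hcon
    exact absurd (hN1' n0 hcon) (lt_irrefl _)
  obtain ⟨jm, hjmem, hjmax⟩ := Finset.exists_max_image (Finset.range N1)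
    (fun j => ‖g j‖) ⟨n0, Finset.mem_range.mpr hn0N1⟩
  set M := ‖g jm‖ with hMdef
  have hMn0 : ‖g n0‖ ≤ M := hjmax n0 (Finset.mem_range.mpr hn0N1)
  have hMpos : 0 < M := lt_of_lt_of_le hgn0 hMn0
  set T := (Finset.range N1).filter (fun j => M ≤ ‖g j‖) with hTdef
  have hTne : T.Nonempty := ⟨jm, Finset.mem_filter.mpr ⟨hjmem, le_refl M⟩⟩
  set m := T.max' hTne with hmdef
  have hmT : m ∈ T := T.max'_mem hTne
  have hmN1 : m < N1 := Finset.mem_range.mp (Finset.mem_filter.mp hmT).1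
  have hgm : ‖g m‖ = M :=
    le_antisymm (hjmax m (Finset.mem_range.mpr hmN1)) (Finset.mem_filter.mp hmT).2
  have hallM : ∀ j, ‖g j‖ ≤ M := by
    intro j
    rcases lt_or_ge j N1 with hj | hj
    · exact hjmax j (Finset.mem_range.mpr hj)
    · exact le_trans (hN1' j hj).le hMn0
  have hltM : ∀ j, m < j → ‖g j‖ < M := by
    intro j hj
    rcases lt_or_ge j N1 with hjN | hjN
    · refine lt_of_le_of_ne (hjmax j (Finset.mem_range.mpr hjN)) (fun hEq => ?_)
      have : j ∈ T := Finset.mem_filter.mpr ⟨Finset.mem_range.mpr hjN, le_of_eq hEq.symm⟩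
      exact absurd (T.le_max' j this) (by omega)
    · exact lt_of_lt_of_le (hN1' j hjN) hMn0
  -- tail bound for g
  have hr2M : 0 < r ^ 2 * M := by positivity
  obtain ⟨N2, hN2⟩ := (Metric.tendsto_atTop.mp hgt) (r ^ 2 * M) hr2M
  set N := max N2 (m + 1) with hNdef
  have hNtail : ∀ j ≥ N, ‖g j‖ ≤ r ^ 2 * M := fun j hj => by
    have := hN2 j (le_trans (le_max_left _ _) hj)
    rw [Real.dist_eq, sub_zero, abs_of_nonneg (norm_nonneg _)] at this
    exact this.le
  have hmN : m < N := lt_of_lt_of_le (Nat.lt_succ_self m) (le_max_right _ _)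
  -- tail bound for f
  have hrM : 0 < r * M := by positivity
  obtain ⟨N3, hN3⟩ := (Metric.tendsto_atTop.mp hft) (r * M) hrM
  have hN3' : ∀ n ≥ N3, ‖f n‖ < r * M := fun n hn => by
    have := hN3 n hn
    rwa [Real.dist_eq, sub_zero, abs_of_nonneg (norm_nonneg _)] at this
  -- choose k with p ^ k large
  set k := N + N3 with hkdef
  have hpk : N + N3 < p ^ k := Nat.lt_pow_self (n := k) hp1
  set n := m + p ^ k with hndef
  -- the auxiliary strict bound C
  set S : Finset ℝ := insert (r ^ 2 * M) ((Finset.Ico (m + 1) N).image fun j => r * ‖g j‖)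
    with hSdef
  have hSne : S.Nonempty := ⟨r ^ 2 * M, Finset.mem_insert_self _ _⟩
  set C := S.max' hSne with hCdef
  have hC1 : C < r * M := by
    rw [hCdef]
    rw [Finset.max'_lt_iff]
    intro x hx
    rcases Finset.mem_insert.mp hx with hx | hx
    · rw [hx]
      have : r ^ 2 * M < r * M := by nlinarith
      exact this
    · obtain ⟨j, hjmem', rfl⟩ := Finset.mem_image.mp hx
      have hjm : m < j := (Finset.mem_Ico.mp hjmem').1
      exact mul_lt_mul_of_pos_left (hltM j hjm) hr0
  have hC2 : r ^ 2 * M ≤ C := S.le_max' _ (Finset.mem_insert_self _ _)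
  have hC3 : ∀ j ∈ Finset.Ico (m + 1) N, r * ‖g j‖ ≤ C := fun j hj =>
    S.le_max' _ (Finset.mem_insert_of_mem (Finset.mem_image.mpr ⟨j, hj, rfl⟩))
  have hC0 : 0 ≤ C := le_trans (by positivity) hC2
  -- the distinguished pair
  have hx0mem : ((p ^ k : ℕ), m) ∈ antidiagonal n := by
    rw [Finset.HasAntidiagonal.mem_antidiagonal]
    omega
  have hmain : ‖c (p ^ k) * g m‖ = r * M := by
    rw [norm_mul, hcnorm, aux_digit_sum_pow p hp1 k, pow_one, hgm]
  -- bound the rest of the sum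
  have hrest : ‖∑ kl ∈ (antidiagonal n).erase ((p ^ k : ℕ), m), c kl.1 * g kl.2‖ ≤ C := by
    refine norm_sum_le_of_forall_le_of_nonneg hC0 (fun kl hkl => ?_)
    obtain ⟨hne, hmem⟩ := Finset.mem_erase.mp hkl
    obtain ⟨i, j⟩ := kl
    have hij : i + j = n := Finset.HasAntidiagonal.mem_antidiagonal.mp hmem
    simp only at hne hij ⊢
    have hmpk : m < p ^ k := by omega
    rcases lt_trichotomy j m with hj | hj | hj
    · -- j < m : digit sum of i is at least 2
      have hi : i = (m - j) + p ^ k := by omega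
      have hsd : (Nat.digits p i).sum = (Nat.digits p (m - j)).sum + 1 := by
        rw [hi]
        exact aux_digit_sum_add p hp1 k (m - j) (by omega)
      have hs2 : 2 ≤ (Nat.digits p i).sum := by
        have := aux_digit_sum_pos p (m - j) (by omega)
        omega
      have hci : ‖c i‖ ≤ r ^ 2 := by
        rw [hcnorm]
        exact pow_le_pow_of_le_one hr0.le hr1.le hs2
      calc ‖c i * g j‖ = ‖c i‖ * ‖g j‖ := norm_mul _ _
        _ ≤ r ^ 2 * M := mul_le_mul hci (hallM j) (norm_nonneg _) (by positivity)
        _ ≤ C := hC2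
    · -- j = m : excluded pair
      exfalso
      apply hne
      have : i = p ^ k := by omega
      rw [this, hj]
    · rcases lt_or_ge j N with hjN | hjN
      · -- m < j < N : middle range
        have hi1 : 1 ≤ i := by omega
        have hci : ‖c i‖ ≤ r := by
          rw [hcnorm]
          have := aux_digit_sum_pos p i (by omega)
          calc r ^ (Nat.digits p i).sum ≤ r ^ 1 :=
                pow_le_pow_of_le_one hr0.le hr1.le this
            _ = r := pow_one r
        calc ‖c i * g j‖ = ‖c i‖ * ‖g j‖ := norm_mul _ _
          _ ≤ r * ‖g j‖ := mul_le_mul_of_nonneg_right hci (norm_nonneg _)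
          _ ≤ C := hC3 j (Finset.mem_Ico.mpr ⟨by omega, hjN⟩)
      · -- j ≥ N : small tail
        calc ‖c i * g j‖ = ‖c i‖ * ‖g j‖ := norm_mul _ _
          _ ≤ 1 * (r ^ 2 * M) := mul_le_mul (hcle1 i) (hNtail j hjN) (norm_nonneg _) one_pos.le
          _ = r ^ 2 * M := one_mul _
          _ ≤ C := hC2
  -- conclude ‖f n‖ = r * M
  have hsplit : h n = c (p ^ k) * g m
      + ∑ kl ∈ (antidiagonal n).erase ((p ^ k : ℕ), m), c kl.1 * g kl.2 :=
    (Finset.add_sum_erase _ _ hx0mem).symm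
  have hfn : ‖f n‖ = r * M := by
    rw [hfh n, hsplit]
    rw [norm_add_eq_max_of_norm_ne_norm
      (by rw [hmain]; exact fun hEq => absurd (hEq ▸ hrest) (not_le.mpr hC1))]
    rw [hmain]
    exact max_eq_left (le_trans hrest hC1.le)
  have hnN3 : N3 ≤ n := by omega
  exact absurd (hN3' n hnN3) (by rw [hfn]; exact lt_irrefl _)
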